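/- Let d be an anonymous and homogeneous standard distance on elections (a hemimetric satisfying d(E,E)=0 and the triangle inequality, with d(E,E')=∞ when voter sets differ in size, invariant under voter permutations and under replication of electorates). Then the quotient distance on the simplex of vote distributions, defined as the infimum over admissible chains Σ d(E_i, E'_i), equals the single-step infimum: d̄(x,y) = inf { d(E,E') : E, E' have equal numbers of voters, and their vote distributions are x and y respectively }. -/

import Mathlib

open scoped ENNReal

/-- An election on the fixed (finite) set `R` of rankings: a number of voters together with
their preferences. -/
def El (R : Type*) := Σ n : ℕ, Fin n → R

/-- The vote distribution of an election: the relative frequency of each ranking. -/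
noncomputable def elDistr {R : Type*} [Fintype R] [DecidableEq R] (E : El R) : R → ℝ :=
  fun r => ((Finset.univ.filter fun i => E.2 i = r).card : ℝ) / E.1

/-- The election `kE` obtained by replicating each voter of `E` `k` times. -/
def elRep {R : Type*} (k : ℕ) (E : El R) : El R :=
  ⟨k * E.1, fun i => E.2 i.modNat⟩

section Aux

variable {R : Type*} [Fintype R] [DecidableEq R]

lemma count_rep (k n : ℕ) (f : Fin n → R) (r : R) :
    (Finset.univ.filter fun i : Fin (k * n) => f i.modNat = r).card
      = k * (Finset.univ.filter fun i => f i = r).card := by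
  have : (Finset.univ.filter fun i : Fin (k * n) => f i.modNat = r).card
      = ((Finset.univ : Finset (Fin k)) ×ˢ (Finset.univ.filter fun i => f i = r)).card := by
    apply Finset.card_bij' (fun a _ => finProdFinEquiv.symm a) (fun b _ => finProdFinEquiv b)
    · intro a ha
      simp only [Finset.mem_filter, Finset.mem_univ, true_and] at ha
      simp [Finset.mem_product, finProdFinEquiv_symm_apply, ha]
    · intro b hb
      simp only [Finset.mem_product, Finset.mem_filter, Finset.mem_univ, true_and] at hb
      have h2 : (finProdFinEquiv b).modNat = b.2 := by
        have := finProdFinEquiv.symm_apply_apply b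
        rw [finProdFinEquiv_symm_apply] at this
        exact congrArg Prod.snd this
      simp [h2, hb]
    · intro a _; exact finProdFinEquiv.apply_symm_apply a
    · intro b _; exact finProdFinEquiv.symm_apply_apply b
  rw [this, Finset.card_product, Finset.card_univ, Fintype.card_fin]

lemma elDistr_rep (k : ℕ) (hk : k ≠ 0) (E : El R) :
    elDistr (elRep k E) = elDistr E := by
  obtain ⟨n, f⟩ := E
  funext r
  show ((Finset.univ.filter fun i : Fin (k * n) => f i.modNat = r).card : ℝ) / (k * n : ℕ)
      = _ / (n : ℕ)
  rw [count_rep]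
  push_cast
  rw [mul_div_mul_left _ _ (by exact_mod_cast hk)]

lemma elDistr_sum (E : El R) (h : E.1 ≠ 0) :
    ∑ r, elDistr E r = 1 := by
  obtain ⟨n, f⟩ := E
  simp only [elDistr]
  rw [← Finset.sum_div]
  have : ∑ r : R, ((Finset.univ.filter fun i : Fin n => f i = r).card : ℝ) = n := by
    rw [← Nat.cast_sum]
    have := Finset.card_eq_sum_card_fiberwise (s := (Finset.univ : Finset (Fin n)))
      (t := (Finset.univ : Finset R)) (f := f) (fun x _ => Finset.mem_univ (f x))
    simp only [Finset.card_univ, Fintype.card_fin] at this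
    exact_mod_cast congrArg Nat.cast this.symm
  rw [this, div_self (by exact_mod_cast h)]

lemma elDistr_zero (E : El R) (h : E.1 = 0) : elDistr E = 0 := by
  funext r; simp [elDistr, h]

lemma size_zero_of_distr_eq {E F : El R} (h : elDistr E = elDistr F) (hE : E.1 = 0) :
    F.1 = 0 := by
  by_contra hF
  have h1 := elDistr_sum F hF
  rw [← h, elDistr_zero E hE] at h1
  simp at h1

lemma el_zero_eq (E F : El R) (hE : E.1 = 0) (hF : F.1 = 0) : E = F := by
  obtain ⟨n, f⟩ := E; obtain ⟨m, g⟩ := F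
  cases hE; cases hF
  congr 1
  funext i; exact i.elim0

lemma exists_perm_of_counts {n : ℕ} (f g : Fin n → R)
    (h : ∀ r, (Finset.univ.filter fun i => g i = r).card
        = (Finset.univ.filter fun i => f i = r).card) :
    ∃ σ : Equiv.Perm (Fin n), g = f ∘ σ := by
  have e : ∀ r : R, (Finset.univ.filter fun i => g i = r : Finset (Fin n))
      ≃ (Finset.univ.filter fun i => f i = r : Finset (Fin n)) :=
    fun r => Finset.equivOfCardEq (h r)
  let σf : Fin n → Fin n := fun i => (e (g i) ⟨i, by simp⟩ : _)
  have key : ∀ i, f (σf i) = g i := by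
    intro i
    have := (e (g i) ⟨i, by simp⟩).2
    simp only [Finset.mem_filter] at this
    exact this.2
  have congr_e : ∀ (r r' : R) (hrr : r = r') (x : Fin n)
      (hx : x ∈ Finset.univ.filter fun i => g i = r),
      ((e r ⟨x, hx⟩ : Fin n)) = (e r' ⟨x, hrr ▸ hx⟩ : Fin n) := by
    rintro r r' rfl x hx; rfl
  have inj : Function.Injective σf := by
    intro i j hij
    have hg : g i = g j := by rw [← key i, ← key j, hij]
    simp only [σf] at hij
    have hij' : ((e (g j)) ⟨i, hg ▸ by simp⟩ : Fin n) = ((e (g j)) ⟨j, by simp⟩ : Fin n) :=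
      (congr_e (g i) (g j) hg i (by simp)).symm.trans hij
    have h2 := (e (g j)).injective (Subtype.ext hij')
    exact congrArg Subtype.val h2
  have bij : Function.Bijective σf := Finite.injective_iff_bijective.mp inj
  refine ⟨Equiv.ofBijective σf bij, ?_⟩
  funext i
  exact (key i).symm

lemma count_comp_perm {n : ℕ} (f : Fin n → R) (σ : Equiv.Perm (Fin n)) (r : R) :
    (Finset.univ.filter fun i => f (σ i) = r).card
      = (Finset.univ.filter fun i => f i = r).card := by
  apply Finset.card_bij' (fun a _ => σ a) (fun b _ => σ.symm b)
  · intro a ha; simp only [Finset.mem_filter, Finset.mem_univ, true_and] at ha ⊢; exact ha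
  · intro b hb; simp only [Finset.mem_filter, Finset.mem_univ, true_and] at hb ⊢
    simpa using hb
  · intro a _; simp
  · intro b _; simp

lemma elDistr_comp_perm {n : ℕ} (f : Fin n → R) (σ : Equiv.Perm (Fin n)) :
    elDistr (⟨n, f ∘ σ⟩ : El R) = elDistr ⟨n, f⟩ := by
  funext r
  show ((Finset.univ.filter fun i => f (σ i) = r).card : ℝ) / n = _
  rw [count_comp_perm]
  rfl

lemma counts_of_distr_eq {n : ℕ} (f g : Fin n → R)
    (hn : n ≠ 0) (h : elDistr (⟨n, f⟩ : El R) = elDistr ⟨n, g⟩) (r : R) :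
    (Finset.univ.filter fun i => f i = r).card
      = (Finset.univ.filter fun i => g i = r).card := by
  have := congrFun h r
  simp only [elDistr] at this
  have hn' : (n : ℝ) ≠ 0 := by exact_mod_cast hn
  field_simp at this
  exact_mod_cast this

lemma glue (d : El R → El R → ℝ≥0∞)
    (hanon : ∀ (n : ℕ) (π σ : Fin n → R) (g : Equiv.Perm (Fin n)),
      d ⟨n, π ∘ g⟩ ⟨n, σ ∘ g⟩ = d ⟨n, π⟩ ⟨n, σ⟩)
    (A B F : El R) (hBA : B.1 = A.1) (hFA : F.1 = A.1) (hpos : A.1 ≠ 0)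
    (hd : elDistr F = elDistr A) :
    ∃ B' : El R, B'.1 = B.1 ∧ elDistr B' = elDistr B ∧ d F B' = d A B := by
  obtain ⟨n, a⟩ := A; obtain ⟨nB, b⟩ := B; obtain ⟨nF, f⟩ := F
  cases hBA; cases hFA
  obtain ⟨σ, hσ⟩ := exists_perm_of_counts a f (counts_of_distr_eq f a hpos hd)
  refine ⟨⟨n, b ∘ σ⟩, rfl, elDistr_comp_perm b σ, ?_⟩
  rw [show (⟨n, f⟩ : El R) = ⟨n, a ∘ σ⟩ from by rw [← hσ]]
  exact hanon n a b σ

lemma chain_bound (d : El R → El R → ℝ≥0∞)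
    (htri : ∀ E F G, d E G ≤ d E F + d F G)
    (hanon : ∀ (n : ℕ) (π σ : Fin n → R) (g : Equiv.Perm (Fin n)),
      d ⟨n, π ∘ g⟩ ⟨n, σ ∘ g⟩ = d ⟨n, π⟩ ⟨n, σ⟩)
    (N : ℕ) (hN : N ≠ 0) :
    ∀ (k : ℕ) (As Bs : Fin (k + 1) → El R),
      (∀ i, (As i).1 = N) → (∀ i, (Bs i).1 = N) →
      (∀ i : Fin k, elDistr (Bs i.castSucc) = elDistr (As i.succ)) →
      ∃ F : El R, F.1 = N ∧ elDistr F = elDistr (Bs (Fin.last k)) ∧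
        d (As 0) F ≤ ∑ i, d (As i) (Bs i) := by
  intro k
  induction k with
  | zero =>
    intro As Bs _ hB _
    refine ⟨Bs (Fin.last 0), hB _, rfl, ?_⟩
    simp [Fin.sum_univ_one, Fin.last]
  | succ k ih =>
    intro As Bs hA hB hlink
    obtain ⟨F, hF1, hF2, hF3⟩ := ih (fun i => As i.castSucc) (fun i => Bs i.castSucc)
      (fun i => hA _) (fun i => hB _)
      (fun i => by
        show elDistr (Bs i.castSucc.castSucc) = elDistr (As i.succ.castSucc)
        rw [← Fin.succ_castSucc]
        exact hlink i.castSucc)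
    have hAlast : elDistr F = elDistr (As (Fin.last (k + 1))) := by
      rw [hF2, ← Fin.succ_last]
      exact hlink (Fin.last k)
    obtain ⟨B', hB1, hB2, hB3⟩ := glue d hanon (As (Fin.last (k + 1))) (Bs (Fin.last (k + 1))) F
      (by rw [hB, hA]) (by rw [hF1, hA]) (by rw [hA]; exact hN) hAlast
    refine ⟨B', by rw [hB1, hB], by rw [hB2], ?_⟩
    have h0 : (fun i : Fin (k + 1) => As i.castSucc) 0 = As 0 := by
      simp
    calc d (As 0) B' ≤ d (As 0) F + d F B' := htri _ _ _
      _ = d (As 0) F + d (As (Fin.last (k + 1))) (Bs (Fin.last (k + 1))) := by rw [hB3]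
      _ ≤ (∑ i : Fin (k + 1), d (As i.castSucc) (Bs i.castSucc))
            + d (As (Fin.last (k + 1))) (Bs (Fin.last (k + 1))) := by
          refine add_le_add ?_ le_rfl
          rw [← h0]; exact hF3
      _ = ∑ i, d (As i) (Bs i) :=
          (Fin.sum_univ_castSucc (f := fun i => d (As i) (Bs i))).symm

end Aux

/-- For an anonymous and homogeneous standard distance `d` on elections, the quotient
distance on the simplex of vote distributions (infimum over admissible chains of
`∑ d(Eᵢ, E'ᵢ)`) equals the single-step infimum of `d(E, E')` over pairs of elections with
equal numbers of voters and vote distributions `x` and `y`. -/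
theorem stmt15 {R : Type*} [Fintype R] [DecidableEq R]
    (d : El R → El R → ℝ≥0∞)
    (hrefl : ∀ E, d E E = 0)
    (htri : ∀ E F G, d E G ≤ d E F + d F G)
    (hstd : ∀ E F : El R, E.1 ≠ F.1 → d E F = ⊤)
    (hanon : ∀ (n : ℕ) (π σ : Fin n → R) (g : Equiv.Perm (Fin n)),
      d ⟨n, π ∘ g⟩ ⟨n, σ ∘ g⟩ = d ⟨n, π⟩ ⟨n, σ⟩)
    (hhom : ∀ k : ℕ, 0 < k → ∀ E F : El R, d (elRep k E) (elRep k F) = d E F)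
    (x y : R → ℝ) :
    sInf {c : ℝ≥0∞ | ∃ (k : ℕ) (Es Fs : Fin (k + 1) → El R),
        elDistr (Es 0) = x ∧ elDistr (Fs (Fin.last k)) = y ∧
        (∀ i : Fin k, elDistr (Fs i.castSucc) = elDistr (Es i.succ)) ∧
        c = ∑ i, d (Es i) (Fs i)} =
      sInf {c : ℝ≥0∞ | ∃ E F : El R, E.1 = F.1 ∧
        elDistr E = x ∧ elDistr F = y ∧ c = d E F} := by
  apply le_antisymm
  · apply le_sInf
    rintro c ⟨E, F, hEF, hx, hy, rfl⟩
    apply sInf_le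
    refine ⟨0, fun _ => E, fun _ => F, hx, hy, fun i => i.elim0, ?_⟩
    rw [Fin.sum_univ_one]
  · apply le_sInf
    rintro c ⟨k, Es, Fs, hx, hy, hlink, rfl⟩
    by_cases htop : ∃ i, d (Es i) (Fs i) = ⊤
    · obtain ⟨i, hi⟩ := htop
      have : ∑ i, d (Es i) (Fs i) = ⊤ :=
        ENNReal.sum_eq_top.mpr ⟨i, Finset.mem_univ i, hi⟩
      rw [this]
      exact le_top
    push_neg at htop
    have hsz : ∀ i, (Es i).1 = (Fs i).1 := fun i => by
      by_contra h; exact htop i (hstd _ _ h)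
    by_cases h0 : (Es 0).1 = 0
    · have hall : ∀ i, (Es i).1 = 0 := by
        intro i
        induction i using Fin.induction with
        | zero => exact h0
        | succ i ih =>
          have hF : (Fs i.castSucc).1 = 0 := (hsz i.castSucc) ▸ ih
          exact size_zero_of_distr_eq (hlink i) hF
      have hy0 : (Fs (Fin.last k)).1 = 0 := (hsz (Fin.last k)) ▸ hall (Fin.last k)
      have hle : sInf {c : ℝ≥0∞ | ∃ E F : El R, E.1 = F.1 ∧
          elDistr E = x ∧ elDistr F = y ∧ c = d E F} ≤ d (Es 0) (Fs (Fin.last k)) :=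
        sInf_le ⟨Es 0, Fs (Fin.last k), by rw [h0, hy0], hx, hy, rfl⟩
      have : d (Es 0) (Fs (Fin.last k)) = 0 := by
        rw [el_zero_eq (Es 0) (Fs (Fin.last k)) h0 hy0]; exact hrefl _
      rw [this] at hle
      exact hle.trans zero_le
    · have hpos : ∀ i, (Es i).1 ≠ 0 := by
        intro i
        induction i using Fin.induction with
        | zero => exact h0
        | succ i ih =>
          intro hz
          have hF : (Fs i.castSucc).1 = 0 :=
            size_zero_of_distr_eq (hlink i).symm hz
          exact ih ((hsz i.castSucc).trans hF)
      set N : ℕ := ∏ i, (Es i).1 with hNdef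
      have hN : N ≠ 0 := by
        simp only [hNdef, Finset.prod_ne_zero_iff]
        exact fun i _ => hpos i
      have hdvd : ∀ i, (Es i).1 ∣ N := fun i =>
        Finset.dvd_prod_of_mem _ (Finset.mem_univ i)
      set m : Fin (k + 1) → ℕ := fun i => N / (Es i).1 with hmdef
      have hmn : ∀ i, m i * (Es i).1 = N := fun i =>
        Nat.div_mul_cancel (hdvd i)
      have hm : ∀ i, m i ≠ 0 := by
        intro i hz
        apply hN
        rw [← hmn i, hz, zero_mul]
      set As : Fin (k + 1) → El R := fun i => elRep (m i) (Es i) with hAsdef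
      set Bs : Fin (k + 1) → El R := fun i => elRep (m i) (Fs i) with hBsdef
      have hA1 : ∀ i, (As i).1 = N := fun i => hmn i
      have hB1 : ∀ i, (Bs i).1 = N := fun i => by
        show m i * (Fs i).1 = N
        rw [← hsz i]; exact hmn i
      have hlink' : ∀ i : Fin k, elDistr (Bs i.castSucc) = elDistr (As i.succ) := by
        intro i
        show elDistr (elRep _ _) = elDistr (elRep _ _)
        rw [elDistr_rep _ (hm _), elDistr_rep _ (hm _)]
        exact hlink i
      obtain ⟨F, hF1, hF2, hF3⟩ := chain_bound d htri hanon N hN k As Bs hA1 hB1 hlink'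
      have hxA : elDistr (As 0) = x := by
        show elDistr (elRep _ _) = x
        rw [elDistr_rep _ (hm _)]; exact hx
      have hyF : elDistr F = y := by
        rw [hF2]
        show elDistr (elRep _ _) = y
        rw [elDistr_rep _ (hm _)]; exact hy
      have hle : sInf {c : ℝ≥0∞ | ∃ E F : El R, E.1 = F.1 ∧
          elDistr E = x ∧ elDistr F = y ∧ c = d E F} ≤ d (As 0) F :=
        sInf_le ⟨As 0, F, by rw [hA1 0, hF1], hxA, hyF, rfl⟩
      have hsum : ∑ i, d (As i) (Bs i) = ∑ i, d (Es i) (Fs i) :=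
        Finset.sum_congr rfl (fun i _ => hhom (m i) (Nat.pos_of_ne_zero (hm i)) _ _)
      exact hle.trans (hF3.trans hsum.le)
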